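/- Suppose v ∈ V is a vertex whose neighborhood N(v) contains both vertices of some terminal pair {s,t} ∈ B. Then every node multicut M of (G,B) contains v, and moreover M is a minimal node multicut of (G,B) if and only if M \ {v} is a minimal node multicut of (G − {v}, B). -/

import Mathlib

open SimpleGraph Set

variable {V : Type*}

/-- The set of terminals occurring in a set `B` of terminal pairs. -/
def terminalSet (B : Set (V × V)) : Set V := {v | ∃ p ∈ B, v = p.1 ∨ v = p.2}

/-- `s` and `t` are separated in `G - M` (the graph obtained by deleting the vertices of `M`). -/
def SepSets (G : SimpleGraph V) (M : Set V) (s t : V) : Prop :=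
  ∀ (hs : s ∈ (Mᶜ : Set V)) (ht : t ∈ (Mᶜ : Set V)),
    ¬ (G.induce (Mᶜ : Set V)).Reachable ⟨s, hs⟩ ⟨t, ht⟩

/-- `M` is a node multicut of `(G, B)`. -/
def IsNodeMulticut (G : SimpleGraph V) (B : Set (V × V)) (M : Set V) : Prop :=
  M ⊆ (terminalSet B)ᶜ ∧ ∀ p ∈ B, SepSets G M p.1 p.2

/-- `M` is a minimal node multicut of `(G, B)`. -/
def IsMinNodeMulticut (G : SimpleGraph V) (B : Set (V × V)) (M : Set V) : Prop :=
  IsNodeMulticut G B M ∧ ∀ M' ⊂ M, ¬ IsNodeMulticut G B M'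

/-- `C` is (the vertex set of) a connected component of `G - M`. -/
def IsCompOf (G : SimpleGraph V) (M : Set V) (C : Set V) : Prop :=
  ∃ c : (G.induce (Mᶜ : Set V)).ConnectedComponent, C = Subtype.val '' c.supp

/-- The graph `G - {v}` obtained by deleting the vertex `v` (here `v` is kept as an
isolated vertex, which does not affect multicuts). -/
def deleteVertex (G : SimpleGraph V) (v : V) : SimpleGraph V where
  Adj a b := G.Adj a b ∧ a ≠ v ∧ b ≠ v
  symm := ⟨fun a b ⟨h, ha, hb⟩ => ⟨h.symm, hb, ha⟩⟩
  loopless := ⟨fun a h => G.loopless.irrefl a h.1⟩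


lemma compl_subset_diff_compl {M : Set V} {v : V} :
    (Mᶜ : Set V) ⊆ ((M \ {v})ᶜ : Set V) :=
  compl_subset_compl.2 diff_subset

lemma reach_fwd (G : SimpleGraph V) (v : V) {M : Set V} (hvM : v ∈ M)
    {s t : V} (hs : s ∈ (Mᶜ : Set V)) (ht : t ∈ (Mᶜ : Set V))
    (h : (G.induce (Mᶜ : Set V)).Reachable ⟨s, hs⟩ ⟨t, ht⟩) :
    ((deleteVertex G v).induce ((M \ {v})ᶜ : Set V)).Reachable
      ⟨s, compl_subset_diff_compl hs⟩ ⟨t, compl_subset_diff_compl ht⟩ := by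
  let f : G.induce (Mᶜ : Set V) →g (deleteVertex G v).induce ((M \ {v})ᶜ : Set V) :=
    { toFun := fun x => ⟨x.val, compl_subset_diff_compl x.property⟩,
      map_rel' := fun {a b} hab =>
        ⟨hab, fun h => a.property ((show (a : V) = v from h) ▸ hvM),
          fun h => b.property ((show (b : V) = v from h) ▸ hvM)⟩ }
  exact h.map f

lemma reach_bwd (G : SimpleGraph V) (v : V) {M : Set V} :
    ∀ {a b : ((M \ {v})ᶜ : Set V)}
      (_ : ((deleteVertex G v).induce ((M \ {v})ᶜ : Set V)).Walk a b)
      (ha : a.val ∈ (Mᶜ : Set V)) (hb : b.val ∈ (Mᶜ : Set V)),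
      (G.induce (Mᶜ : Set V)).Reachable ⟨a.val, ha⟩ ⟨b.val, hb⟩ := by
  intro a b w
  induction w with
  | nil => intro ha hb; exact Reachable.refl _
  | @cons x y z h p ih =>
    intro ha hb
    have hyv : y.val ≠ v := h.2.2
    have hy : y.val ∈ (Mᶜ : Set V) := fun hm => y.property ⟨hm, hyv⟩
    have e : (G.induce (Mᶜ : Set V)).Adj ⟨x.val, ha⟩ ⟨y.val, hy⟩ := h.1
    exact e.reachable.trans (ih hy hb)

lemma sep_iff (G : SimpleGraph V) (v : V) {M : Set V} (hvM : v ∈ M) {s t : V}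
    (hsv : s ≠ v) (htv : t ≠ v) :
    SepSets G M s t ↔ SepSets (deleteVertex G v) (M \ {v}) s t := by
  constructor
  · intro h hs' ht' hreach
    have hs : s ∈ (Mᶜ : Set V) := fun hm => hs' ⟨hm, hsv⟩
    have ht : t ∈ (Mᶜ : Set V) := fun hm => ht' ⟨hm, htv⟩
    exact h hs ht (hreach.elim fun w => reach_bwd G v w hs ht)
  · intro h hs ht hreach
    exact h (compl_subset_diff_compl hs) (compl_subset_diff_compl ht)
      (reach_fwd G v hvM hs ht hreach)

lemma cut_iff (G : SimpleGraph V) (B : Set (V × V)) (v : V) (hv : v ∉ terminalSet B)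
    {M : Set V} (hvM : v ∈ M) :
    IsNodeMulticut G B M ↔ IsNodeMulticut (deleteVertex G v) B (M \ {v}) := by
  have hterm : ∀ p ∈ B, p.1 ≠ v ∧ p.2 ≠ v := fun p hp =>
    ⟨fun h => hv ⟨p, hp, Or.inl h.symm⟩, fun h => hv ⟨p, hp, Or.inr h.symm⟩⟩
  constructor
  · rintro ⟨h1, h2⟩
    exact ⟨diff_subset.trans h1, fun p hp =>
      (sep_iff G v hvM (hterm p hp).1 (hterm p hp).2).1 (h2 p hp)⟩
  · rintro ⟨h1, h2⟩
    refine ⟨fun x hx => ?_, fun p hp =>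
      (sep_iff G v hvM (hterm p hp).1 (hterm p hp).2).2 (h2 p hp)⟩
    by_cases hxv : x = v
    · subst hxv; exact hv
    · exact h1 ⟨hx, hxv⟩

/-- If the neighborhood of a vertex `v` contains both vertices of some
terminal pair of `B`, then every node multicut of `(G, B)` contains `v`, and moreover a set
`M` containing `v` is a minimal node multicut of `(G, B)` if and only if `M \ {v}` is a
minimal node multicut of `(G - {v}, B)`. -/
theorem node_multicut_delete_dominating_vertex (G : SimpleGraph V) (B : Set (V × V))
    (v : V) (hv : v ∉ terminalSet B)
    (hpair : ∃ p ∈ B, G.Adj v p.1 ∧ G.Adj v p.2) :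
    (∀ M : Set V, IsNodeMulticut G B M → v ∈ M) ∧
    (∀ M : Set V, v ∈ M →
      (IsMinNodeMulticut G B M ↔ IsMinNodeMulticut (deleteVertex G v) B (M \ {v}))) := by
  have part1 : ∀ M : Set V, IsNodeMulticut G B M → v ∈ M := by
    rintro M ⟨h1, h2⟩
    by_contra hvM
    obtain ⟨p, hp, ha1, ha2⟩ := hpair
    have hs : p.1 ∈ (Mᶜ : Set V) := fun h => h1 h ⟨p, hp, Or.inl rfl⟩
    have ht : p.2 ∈ (Mᶜ : Set V) := fun h => h1 h ⟨p, hp, Or.inr rfl⟩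
    have hvm : v ∈ (Mᶜ : Set V) := hvM
    refine h2 p hp hs ht ?_
    have e1 : (G.induce (Mᶜ : Set V)).Adj ⟨p.1, hs⟩ ⟨v, hvm⟩ := ha1.symm
    have e2 : (G.induce (Mᶜ : Set V)).Adj ⟨v, hvm⟩ ⟨p.2, ht⟩ := ha2
    exact e1.reachable.trans e2.reachable
  refine ⟨part1, fun M hvMem => ?_⟩
  constructor
  · rintro ⟨hcut, hmin⟩
    refine ⟨(cut_iff G B v hv hvMem).1 hcut, ?_⟩
    intro M' hM' hM'cut
    have hvM' : v ∉ M' := fun h => (hM'.subset h).2 rfl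
    have hcut2 : IsNodeMulticut G B (M' ∪ {v}) := by
      have hv2 : v ∈ M' ∪ {v} := Or.inr rfl
      have heq : (M' ∪ {v}) \ {v} = M' := by
        rw [union_diff_right, diff_singleton_eq_self hvM']
      rw [cut_iff G B v hv hv2, heq]; exact hM'cut
    refine hmin (M' ∪ {v}) ?_ hcut2
    obtain ⟨x, hxM, hxM'⟩ := exists_of_ssubset hM'
    constructor
    · exact union_subset (hM'.subset.trans diff_subset) (singleton_subset_iff.2 hvMem)
    · intro hsub
      exact hxM' ((hsub hxM.1).resolve_right hxM.2)
  · rintro ⟨hcut, hmin⟩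
    refine ⟨(cut_iff G B v hv hvMem).2 hcut, ?_⟩
    intro M' hM' hM'cut
    have hvM' : v ∈ M' := part1 M' hM'cut
    refine hmin (M' \ {v}) ?_ ((cut_iff G B v hv hvM').1 hM'cut)
    obtain ⟨x, hxM, hxM'⟩ := exists_of_ssubset hM'
    have hxv : x ≠ v := fun h => hxM' (h ▸ hvM')
    exact ⟨diff_subset_diff_left hM'.subset, fun hsub => hxM' (hsub ⟨hxM, hxv⟩).1⟩
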